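/- Let θ > 0, let p̄ = (x̄, ȳ, t̄) ∈ ℍ^n, r > 0, and set ρ = 2(1 + 1/sin θ) r. Let a = (a₁,a₂,a₃) ∈ B_H(p̄, 2r). Then for every unit vector (e'₁,e'₂) ∈ ℝ^n × ℝ^n (‖e'₁‖²+‖e'₂‖² = 1) and every s with 0 ≤ s ≤ r/sin θ, the point q = (se'₁ + a₁, se'₂ + a₂, 2s(⟨e'₁,ȳ⟩ − ⟨e'₂,x̄⟩) + a₃) belongs to B_H(p̄, ρ). -/
import Mathlib

open MeasureTheory Set
open scoped ENNReal NNReal RealInnerProductSpace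

noncomputable section

/-- The Heisenberg (Korányi) distance between `(x̄,ȳ,t̄)` and `(x,y,t)`, written in coordinates:
`d_H((x̄,ȳ,t̄),(x,y,t)) = ((‖x̄−x‖²+‖ȳ−y‖²)² + (t̄−t+2(⟨x,ȳ⟩−⟨y,x̄⟩))²)^(1/4)`. -/
def heisDistT {n : ℕ} (xb yb x y : EuclideanSpace ℝ (Fin n)) (tb t : ℝ) : ℝ :=
  ((‖xb - x‖^2 + ‖yb - y‖^2)^2 + (tb - t + 2*(⟪x, yb⟫ - ⟪y, xb⟫))^2) ^ ((1:ℝ)/4)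

lemma quarter_lt_of_lt {X Y : ℝ} (hX : 0 ≤ X) (hY : 0 < Y) (h : X < Y^4) :
    X ^ ((1:ℝ)/4) < Y := by
  calc X ^ ((1:ℝ)/4) < (Y^4) ^ ((1:ℝ)/4) :=
        Real.rpow_lt_rpow hX h (by norm_num)
    _ = Y := by
        rw [← Real.rpow_natCast Y 4, ← Real.rpow_mul hY.le]
        norm_num

lemma lt_of_quarter_lt {X Y : ℝ} (hX : 0 ≤ X) (h : X ^ ((1:ℝ)/4) < Y) :
    X < Y^4 := by
  have h0 : 0 ≤ X ^ ((1:ℝ)/4) := Real.rpow_nonneg hX _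
  have := pow_lt_pow_left₀ h h0 (n := 4) (by norm_num)
  calc X = (X ^ ((1:ℝ)/4))^4 := by
        rw [← Real.rpow_natCast (X ^ ((1:ℝ)/4)) 4, ← Real.rpow_mul hX]
        norm_num
    _ < Y^4 := this

set_option maxHeartbeats 1000000 in
lemma heis_arith (r c s T u1 u2 v1 v2 N1 N2 : ℝ)
    (hr : 0 < r) (hc : 1 ≤ c) (hs0 : 0 ≤ s) (hscr : s ≤ c * r)
    (hv : v1^2 + v2^2 = 1) (hv1 : 0 ≤ v1) (hv2 : 0 ≤ v2)
    (hu1 : 0 ≤ u1) (hu2 : 0 ≤ u2) (hN1 : 0 ≤ N1) (hN2 : 0 ≤ N2)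
    (k1 : N1 ≤ u1 + s*v1) (k2 : N2 ≤ u2 + s*v2)
    (ha : (u1^2 + u2^2)^2 + T^2 < (2*r)^4) :
    (N1^2 + N2^2)^2 + T^2 < (2*(1+c)*r)^4 := by
  set A : ℝ := u1^2 + u2^2 with hA
  set B : ℝ := u1*v1 + u2*v2 with hB
  have hA0 : 0 ≤ A := by positivity
  have hB0 : 0 ≤ B := by positivity
  have hBA : B^2 ≤ A := by nlinarith [sq_nonneg (u1*v2 - u2*v1)]
  set A' : ℝ := N1^2 + N2^2 with hA'
  have hA'0 : 0 ≤ A' := by positivity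
  have hA'le : A' ≤ A + 2*s*B + s^2 := by nlinarith [sq_nonneg N1, sq_nonneg N2, (mul_nonneg hs0 hv1), (mul_nonneg hs0 hv2)]
  have hAlt : A < 4*r^2 := by nlinarith [sq_nonneg T, sq_nonneg (A - 4*r^2)]
  have hBlt : B < 2*r := by nlinarith [hBA, hAlt, hB0, hr, sq_nonneg (B - 2*r)]
  have hA'lt : A' < (2+c)^2 * r^2 := by nlinarith [hA'le, hAlt, hBlt, hscr, hs0, hc, hr, mul_le_mul_of_nonneg_left hscr hs0]
  have hT2 : T^2 < 16*r^4 := by nlinarith [sq_nonneg A]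
  have hA'2 : A'^2 < (2+c)^4 * r^4 := by nlinarith [sq_nonneg A', sq_nonneg r]
  nlinarith [hA'2, hT2, sq_nonneg (c-1), sq_nonneg c, mul_pos hr hr]

theorem segments_contained_in_enlarged_ball
    (n : ℕ) (θ r : ℝ) (hθ : 0 < θ) (hr : 0 < r)
    (xb yb a₁ a₂ : EuclideanSpace ℝ (Fin n)) (tb a₃ : ℝ)
    (ha : heisDistT xb yb a₁ a₂ tb a₃ < 2*r)
    (e₁' e₂' : EuclideanSpace ℝ (Fin n)) (he : ‖e₁'‖^2 + ‖e₂'‖^2 = 1)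
    (s : ℝ) (hs0 : 0 ≤ s) (hs : s ≤ r / Real.sin θ) :
    heisDistT xb yb (s • e₁' + a₁) (s • e₂' + a₂) tb
        (2*s*(⟪e₁', yb⟫ - ⟪e₂', xb⟫) + a₃)
      < 2*(1 + 1/Real.sin θ)*r := by
  rcases lt_trichotomy (Real.sin θ) 0 with hsin | hsin | hsin
  · exfalso
    have : r / Real.sin θ < 0 := div_neg_of_pos_of_neg hr hsin
    linarith
  · have hs' : s = 0 := le_antisymm (by simpa [hsin] using hs) hs0
    simpa [hs', hsin] using ha
  · set c : ℝ := 1 / Real.sin θ with hc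
    have hsin1 : Real.sin θ ≤ 1 := Real.sin_le_one θ
    have hc1 : 1 ≤ c := by
      rw [hc, le_div_iff₀ hsin]; linarith
    have hscr : s ≤ c * r := by
      rw [hc]; calc s ≤ r / Real.sin θ := hs
        _ = 1 / Real.sin θ * r := by ring
    unfold heisDistT at ha ⊢
    have hTeq : tb - (2*s*(⟪e₁', yb⟫ - ⟪e₂', xb⟫) + a₃)
        + 2*(⟪s • e₁' + a₁, yb⟫ - ⟪s • e₂' + a₂, xb⟫)
        = tb - a₃ + 2*(⟪a₁, yb⟫ - ⟪a₂, xb⟫) := by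
      simp only [inner_add_left, real_inner_smul_left]
      ring
    rw [hTeq]
    have h1 : ‖xb - (s • e₁' + a₁)‖ ≤ ‖xb - a₁‖ + s * ‖e₁'‖ := by
      have hx : xb - (s • e₁' + a₁) = (xb - a₁) - s • e₁' := by abel
      rw [hx]
      calc ‖(xb - a₁) - s • e₁'‖ ≤ ‖xb - a₁‖ + ‖s • e₁'‖ := norm_sub_le _ _
        _ = ‖xb - a₁‖ + s * ‖e₁'‖ := by rw [norm_smul, Real.norm_of_nonneg hs0]
    have h2 : ‖yb - (s • e₂' + a₂)‖ ≤ ‖yb - a₂‖ + s * ‖e₂'‖ := by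
      have hy : yb - (s • e₂' + a₂) = (yb - a₂) - s • e₂' := by abel
      rw [hy]
      calc ‖(yb - a₂) - s • e₂'‖ ≤ ‖yb - a₂‖ + ‖s • e₂'‖ := norm_sub_le _ _
        _ = ‖yb - a₂‖ + s * ‖e₂'‖ := by rw [norm_smul, Real.norm_of_nonneg hs0]
    have ha' : (‖xb - a₁‖^2 + ‖yb - a₂‖^2)^2
        + (tb - a₃ + 2*(⟪a₁, yb⟫ - ⟪a₂, xb⟫))^2 < (2*r)^4 :=
      lt_of_quarter_lt (by positivity) ha
    have key := heis_arith r c s (tb - a₃ + 2*(⟪a₁, yb⟫ - ⟪a₂, xb⟫))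
      ‖xb - a₁‖ ‖yb - a₂‖ ‖e₁'‖ ‖e₂'‖
      ‖xb - (s • e₁' + a₁)‖ ‖yb - (s • e₂' + a₂)‖
      hr hc1 hs0 hscr he (norm_nonneg _) (norm_nonneg _) (norm_nonneg _)
      (norm_nonneg _) (norm_nonneg _) (norm_nonneg _) h1 h2 ha'
    exact quarter_lt_of_lt (by positivity) (by nlinarith) key
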